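/- Parity of the quantum–quantum comparator: for every n ≥ 2, the permutation of Fin (2^n) × Fin (2^n) × Bool defined by (a, b, z) ↦ (a, b, xor z (decide (a < b))) has sign +1, i.e., it is an even permutation (consistent with the existence of an ancilla-free implementation of the n-bit quantum–quantum comparator over the {CCX, CX, X} gate set). -/

import Mathlib

/-- The action of the `n`-bit quantum–quantum comparator: it maps `(a, b, z)` to
`(a, b, xor z (decide (a < b)))`. -/
def qqCmpFun (n : ℕ) : Fin (2 ^ n) × Fin (2 ^ n) × Bool → Fin (2 ^ n) × Fin (2 ^ n) × Bool :=
  fun p => (p.1, p.2.1, xor p.2.2 (decide (p.1 < p.2.1)))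

theorem qqCmpFun_involutive (n : ℕ) : Function.Involutive (qqCmpFun n) := by
  rintro ⟨a, b, z⟩
  simp [qqCmpFun, Bool.xor_assoc]
  by_cases h : a < b <;> simp [h]

/-- The `n`-bit quantum–quantum comparator, as a permutation of
`Fin (2^n) × Fin (2^n) × Bool`. -/
def qqCmp (n : ℕ) : Equiv.Perm (Fin (2 ^ n) × Fin (2 ^ n) × Bool) :=
  (qqCmpFun_involutive n).toPerm _

lemma qqCmp_eq (n : ℕ) : qqCmp n =
    Equiv.prodCongrRight (fun a : Fin (2 ^ n) =>
      Equiv.prodCongrRight (fun b : Fin (2 ^ n) =>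
        if a < b then Equiv.swap false true else 1)) := by
  refine Equiv.ext ?_
  rintro ⟨a, b, z⟩
  by_cases h : a < b <;> cases z <;>
    simp [qqCmp, qqCmpFun, Function.Involutive.coe_toPerm, Equiv.prodCongrRight, h,
      Equiv.swap_apply_def]

lemma qqCmp_sign_aux (m : ℕ) (a : Fin m) :
    ∏ b : Fin m, Equiv.Perm.sign (if a < b then Equiv.swap false true else 1)
      = (-1 : ℤˣ) ^ (Finset.Ioi a).card := by
  have hf : (Finset.univ.filter (a < ·)) = Finset.Ioi a := by
    ext b; simp
  calc ∏ b : Fin m, Equiv.Perm.sign (if a < b then Equiv.swap false true else 1)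
      = ∏ b : Fin m, (if a < b then (-1 : ℤˣ) else 1) := by
        refine Finset.prod_congr rfl fun b _ => ?_
        split <;> simp
    _ = (-1 : ℤˣ) ^ (Finset.Ioi a).card := by
        rw [Finset.prod_ite, Finset.prod_const, Finset.prod_const, one_pow, mul_one, hf]

/-- **Parity of the quantum–quantum comparator.**
For every `n ≥ 2`, the quantum–quantum comparator permutation
`(a, b, z) ↦ (a, b, xor z (decide (a < b)))` of `Fin (2^n) × Fin (2^n) × Bool` has sign
`+1`, i.e. it is an even permutation (consistent with the existence of an ancilla-free
implementation over the `{CCX, CX, X}` gate set). -/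
theorem qqCmp_sign (n : ℕ) (hn : 2 ≤ n) : Equiv.Perm.sign (qqCmp n) = 1 := by
  set m := 2 ^ n with hm
  have key : Equiv.Perm.sign (qqCmp n) =
      (-1 : ℤˣ) ^ (∑ a : Fin m, (Finset.Ioi a).card) := by
    rw [qqCmp_eq, Equiv.Perm.sign_prodCongrRight, ← Finset.prod_pow_eq_pow_sum]
    refine Finset.prod_congr rfl fun a _ => ?_
    rw [Equiv.Perm.sign_prodCongrRight, qqCmp_sign_aux]
  rw [key]
  have hsum : (∑ a : Fin m, (Finset.Ioi a).card) = ∑ i ∈ Finset.range m, i := by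
    simp only [Fin.card_Ioi]
    rw [Fin.sum_univ_eq_sum_range (fun i => m - 1 - i) m,
      Finset.sum_range_reflect (fun i => i) m]
  have heven : Even (∑ a : Fin m, (Finset.Ioi a).card) := by
    rw [hsum]
    have h2 : (∑ i ∈ Finset.range m, i) * 2 = m * (m - 1) := Finset.sum_range_id_mul_two m
    have h4 : 4 ∣ m := by
      rw [hm]
      calc (4 : ℕ) = 2 ^ 2 := by norm_num
        _ ∣ 2 ^ n := pow_dvd_pow 2 hn
    obtain ⟨k, hk⟩ := h4
    obtain ⟨T, hT⟩ : ∃ T, (∑ i ∈ Finset.range m, i) * 2 = 4 * T :=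
      ⟨k * (m - 1), by rw [h2, hk]; ring⟩
    rw [Nat.even_iff]
    omega
  exact heven.neg_one_pow
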